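/- There is a constant C > 0 such that for all real K ≥ 1 and all real L with K/2 < L ≤ K, ∫_{x₀}^{1/2} (log(1/x))^L dx ≤ Γ(L+1) exp(−C K), where x₀ = exp(−⌊(⌊K⌋+1)/100⌋). -/

import Mathlib

open MeasureTheory Set

theorem integral_log_rpow_tail :
    ∃ C > 0, ∀ K : ℝ, 1 ≤ K → ∀ L : ℝ, K / 2 < L → L ≤ K →
      (∫ x in Icc (Real.exp (-(((⌊K⌋₊ + 1) / 100 : ℕ) : ℝ))) (1 / 2 : ℝ),
          Real.log (1 / x) ^ L) ≤ Real.Gamma (L + 1) * Real.exp (-C * K) := by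
  refine ⟨1/20, by norm_num, ?_⟩
  intro K hK L hL1 hL2
  set m : ℕ := (⌊K⌋₊ + 1) / 100 with hm
  have hKpos : (0:ℝ) < K := by linarith
  have hL0 : 0 < L := lt_trans (by linarith) hL1
  have hGpos : 0 < Real.Gamma (L + 1) := Real.Gamma_pos_of_pos (by linarith)
  rcases Nat.eq_zero_or_pos m with h0 | h1
  · rw [h0]
    simp only [Nat.cast_zero, neg_zero, Real.exp_zero]
    rw [show Icc (1:ℝ) (1/2) = ∅ from Icc_eq_empty (by norm_num)]
    simp only [Measure.restrict_empty, integral_zero_measure]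
    positivity
  -- main case : m ≥ 1
  have hK99 : (99:ℝ) ≤ K := by
    have h100 : 99 ≤ ⌊K⌋₊ := by omega
    have : (99:ℝ) ≤ (⌊K⌋₊ : ℝ) := by exact_mod_cast h100
    exact this.trans (Nat.floor_le hKpos.le)
  have hm1 : (1:ℝ) ≤ (m:ℝ) := by exact_mod_cast h1
  have hmK : (m:ℝ) ≤ K / 50 := by
    have h1' : ((m:ℝ)) ≤ ((⌊K⌋₊ + 1 : ℕ) : ℝ) / 100 := Nat.cast_div_le
    have h2 : ((⌊K⌋₊ : ℕ) : ℝ) ≤ K := Nat.floor_le hKpos.le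
    push_cast at h1'
    linarith
  set x₀ : ℝ := Real.exp (-(m:ℝ)) with hx₀
  have hx₀pos : 0 < x₀ := Real.exp_pos _
  have hx₀half : x₀ ≤ 1/2 := by
    have h1e : x₀ ≤ Real.exp (-1) := Real.exp_le_exp.2 (by linarith)
    have he : Real.exp (-1) ≤ 1/2 := by
      rw [Real.exp_neg, inv_le_comm₀ (Real.exp_pos 1) (by norm_num)]
      nlinarith [Real.add_one_le_exp (1:ℝ)]
    linarith
  -- Step 1: bound the integral by (1/2) * m ^ L
  have hIbound : (∫ x in Icc x₀ (1/2 : ℝ), Real.log (1 / x) ^ L)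
      ≤ (1/2) * (m:ℝ) ^ L := by
    have hcont : ContinuousOn (fun x : ℝ => Real.log (1 / x) ^ L) (Icc x₀ (1/2)) := by
      apply ContinuousOn.rpow_const
      · apply ContinuousOn.log
        · exact continuousOn_const.div continuousOn_id fun x hx => ne_of_gt (lt_of_lt_of_le hx₀pos hx.1)
        · intro x hx
          have hx0 : 0 < x := lt_of_lt_of_le hx₀pos hx.1
          positivity
      · intro x hx; right; exact hL0.le
    have hInt : IntegrableOn (fun x : ℝ => Real.log (1 / x) ^ L) (Icc x₀ (1/2)) :=
      hcont.integrableOn_compact isCompact_Icc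
    have hle : ∀ x ∈ Icc x₀ (1/2 : ℝ), Real.log (1 / x) ^ L ≤ (m:ℝ) ^ L := by
      intro x hx
      have hx0 : 0 < x := lt_of_lt_of_le hx₀pos hx.1
      have hlog_nonneg : 0 ≤ Real.log (1 / x) := by
        apply Real.log_nonneg
        rw [le_div_iff₀ hx0]; linarith [hx.2]
      have hlog_le : Real.log (1 / x) ≤ (m:ℝ) := by
        rw [one_div, Real.log_inv]
        have hlx : -(m:ℝ) ≤ Real.log x := by
          calc -(m:ℝ) = Real.log x₀ := by rw [hx₀, Real.log_exp]
          _ ≤ Real.log x := Real.log_le_log hx₀pos hx.1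
        linarith
      exact Real.rpow_le_rpow hlog_nonneg hlog_le hL0.le
    calc (∫ x in Icc x₀ (1/2 : ℝ), Real.log (1 / x) ^ L)
        ≤ ∫ _ in Icc x₀ (1/2 : ℝ), (m:ℝ) ^ L :=
          setIntegral_mono_on hInt (integrableOn_const (by
            rw [Real.volume_Icc]; exact ENNReal.ofReal_ne_top)) measurableSet_Icc hle
      _ = (volume (Icc x₀ (1/2 : ℝ))).toReal * (m:ℝ) ^ L := by
          rw [setIntegral_const]; rfl
      _ ≤ (1/2) * (m:ℝ) ^ L := by
          apply mul_le_mul_of_nonneg_right _ (Real.rpow_nonneg (by positivity) _)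
          rw [Real.volume_Icc, ENNReal.toReal_ofReal (by linarith)]
          linarith
  -- Step 2: lower bound on Gamma
  have hGlb : (2 * (m:ℝ)) ^ L * Real.exp (-(2 * (m:ℝ) + 1)) ≤ Real.Gamma (L + 1) := by
    rw [Real.Gamma_eq_integral (by linarith)]
    have hrw : (fun x : ℝ => Real.exp (-x) * x ^ (L + 1 - 1))
        = fun x : ℝ => Real.exp (-x) * x ^ L := by
      funext x; norm_num
    rw [hrw]
    have hint : IntegrableOn (fun x : ℝ => Real.exp (-x) * x ^ L) (Ioi 0) := by
      have := Real.GammaIntegral_convergent (s := L + 1) (by linarith)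
      rwa [hrw] at this
    have hsub : Ioc (2 * (m:ℝ)) (2 * (m:ℝ) + 1) ⊆ Ioi 0 := fun x hx => by
      simp only [mem_Ioi]; simp only [mem_Ioc] at hx; nlinarith [hx.1]
    calc (2 * (m:ℝ)) ^ L * Real.exp (-(2 * (m:ℝ) + 1))
        = ∫ _ in Ioc (2 * (m:ℝ)) (2 * (m:ℝ) + 1),
            Real.exp (-(2 * (m:ℝ) + 1)) * (2 * (m:ℝ)) ^ L := by
          rw [setIntegral_const, measureReal_def, Real.volume_Ioc]
          rw [show 2 * (m:ℝ) + 1 - 2 * (m:ℝ) = 1 by ring]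
          simp [mul_comm]
      _ ≤ ∫ x in Ioc (2 * (m:ℝ)) (2 * (m:ℝ) + 1), Real.exp (-x) * x ^ L := by
          apply setIntegral_mono_on
          · exact integrableOn_const (by rw [Real.volume_Ioc]; exact ENNReal.ofReal_ne_top)
          · exact hint.mono_set hsub
          · exact measurableSet_Ioc
          · intro x hx
            have hx1 := hx.1; have hx2 := hx.2
            have h2m : (0:ℝ) < 2 * (m:ℝ) := by linarith
            apply mul_le_mul
            · exact Real.exp_le_exp.2 (by linarith)
            · exact Real.rpow_le_rpow h2m.le hx1.le hL0.le
            · exact Real.rpow_nonneg h2m.le _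
            · exact (Real.exp_pos _).le
      _ ≤ ∫ x in Ioi (0:ℝ), Real.exp (-x) * x ^ L := by
          apply setIntegral_mono_set hint
          · filter_upwards [ae_restrict_mem measurableSet_Ioi] with x hx
            have hx0 : (0:ℝ) < x := hx
            positivity
          · exact HasSubset.Subset.eventuallyLE hsub
  -- Step 3: combine
  have hlog2 : (0.6931471803 : ℝ) < Real.log 2 := Real.log_two_gt_d9
  have hkey : 2 * (m:ℝ) + 1 + (1/20) * K ≤ (L + 1) * Real.log 2 := by
    have hp : (K/2 + 1) * (0.6931471803 : ℝ) ≤ (L + 1) * Real.log 2 := by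
      apply mul_le_mul (by linarith) hlog2.le (by norm_num) (by linarith)
    nlinarith
  have hmain : (1/2) * (m:ℝ) ^ L
      ≤ (2 * (m:ℝ)) ^ L * Real.exp (-(2 * (m:ℝ) + 1)) * Real.exp (-(1/20) * K) := by
    have hE : Real.exp (-(2 * (m:ℝ) + 1)) * Real.exp (-(1/20) * K)
        = (Real.exp (2 * (m:ℝ) + 1 + 1/20 * K))⁻¹ := by
      rw [← Real.exp_add, ← Real.exp_neg]; ring_nf
    rw [Real.mul_rpow (by norm_num) (by positivity), mul_assoc, hE]
    have hEpos : 0 < Real.exp (2 * (m:ℝ) + 1 + 1/20 * K) := Real.exp_pos _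
    have h2L : Real.exp (2 * (m:ℝ) + 1 + 1/20 * K) ≤ 2 * (2:ℝ) ^ L := by
      have h2 : 2 * (2:ℝ) ^ L = Real.exp ((L + 1) * Real.log 2) := by
        rw [Real.rpow_def_of_pos (by norm_num : (0:ℝ) < 2),
          show (L + 1) * Real.log 2 = Real.log 2 + Real.log 2 * L by ring,
          Real.exp_add, Real.exp_log (by norm_num : (0:ℝ) < 2)]
      rw [h2]; exact Real.exp_le_exp.2 (by linarith)
    have hmL : (0:ℝ) < (m:ℝ) ^ L := Real.rpow_pos_of_pos (by linarith) _
    rw [← div_eq_mul_inv, le_div_iff₀ hEpos]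
    nlinarith [mul_le_mul_of_nonneg_left h2L hmL.le]
  calc (∫ x in Icc x₀ (1/2 : ℝ), Real.log (1 / x) ^ L)
      ≤ (1/2) * (m:ℝ) ^ L := hIbound
    _ ≤ (2 * (m:ℝ)) ^ L * Real.exp (-(2 * (m:ℝ) + 1)) * Real.exp (-(1/20) * K) := hmain
    _ ≤ Real.Gamma (L + 1) * Real.exp (-(1/20) * K) :=
        mul_le_mul_of_nonneg_right hGlb (Real.exp_pos _).le
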